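/- Let A be an atomic concept and R a role name, and define concepts C_0 = A and C_{n+1} = A ⊓ ∃R.C_n. Then for every natural number n, C_n is not subsumed by C_{n+1} with respect to the empty TBox; that is, for every n there exists a DL interpretation I such that C_n^I is not contained in C_{n+1}^I. Consequently, no C_n is a most specific concept of the individual a in the ontology with empty TBox and ABox {A(a), R(a,a)}. -/

import Mathlib

/-- A role is either a role name or the inverse of a role name. -/
inductive DLRole (R : Type) : Type where
  | atomic : R → DLRole R
  | inv : R → DLRole R

/-- The inverse of a role. -/
def DLRole.invert {R : Type} : DLRole R → DLRole R
  | .atomic r => .inv r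
  | .inv r => .atomic r

/-- DL concepts over atomic concepts `C`, role names `R`, individual names `Ind`. -/
inductive DLConcept (C R Ind : Type) : Type where
  | atomic : C → DLConcept C R Ind
  | nominal : Ind → DLConcept C R Ind
  | top : DLConcept C R Ind
  | bot : DLConcept C R Ind
  | neg : DLConcept C R Ind → DLConcept C R Ind
  | conj : DLConcept C R Ind → DLConcept C R Ind → DLConcept C R Ind
  | disj : DLConcept C R Ind → DLConcept C R Ind → DLConcept C R Ind
  | ex : DLRole R → DLConcept C R Ind → DLConcept C R Ind
  | all : DLRole R → DLConcept C R Ind → DLConcept C R Ind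

/-- A DL interpretation. -/
structure DLInterp (C R Ind : Type) : Type 1 where
  Δ : Type
  nonempty : Nonempty Δ
  conceptI : C → Set Δ
  roleI : R → Set (Δ × Δ)
  indI : Ind → Δ

/-- Interpretation of a (possibly inverse) role. -/
def DLInterp.role {C R Ind : Type} (I : DLInterp C R Ind) : DLRole R → Set (I.Δ × I.Δ)
  | .atomic r => I.roleI r
  | .inv r => {p | (p.2, p.1) ∈ I.roleI r}

/-- Interpretation of a concept. -/
def DLInterp.concept {C R Ind : Type} (I : DLInterp C R Ind) : DLConcept C R Ind → Set I.Δ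
  | .atomic A => I.conceptI A
  | .nominal o => {I.indI o}
  | .top => Set.univ
  | .bot => ∅
  | .neg c => (I.concept c)ᶜ
  | .conj c d => I.concept c ∩ I.concept d
  | .disj c d => I.concept c ∪ I.concept d
  | .ex r c => {x | ∃ y, (x, y) ∈ I.role r ∧ y ∈ I.concept c}
  | .all r c => {x | ∀ y, (x, y) ∈ I.role r → y ∈ I.concept c}

/-- TBox axioms: GCIs, role inclusions, transitivity declarations. -/
inductive DLAxiom (C R Ind : Type) : Type where
  | gci : DLConcept C R Ind → DLConcept C R Ind → DLAxiom C R Ind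
  | roleIncl : DLRole R → DLRole R → DLAxiom C R Ind
  | transRole : R → DLAxiom C R Ind

/-- ABox assertions. -/
inductive DLAssertion (C R Ind : Type) : Type where
  | conceptAssert : DLConcept C R Ind → Ind → DLAssertion C R Ind
  | roleAssert : DLRole R → Ind → Ind → DLAssertion C R Ind

/-- Satisfaction of a TBox axiom. -/
def DLInterp.satAxiom {C R Ind : Type} (I : DLInterp C R Ind) : DLAxiom C R Ind → Prop
  | .gci c d => I.concept c ⊆ I.concept d
  | .roleIncl r s => I.role r ⊆ I.role s
  | .transRole r => ∀ x y z : I.Δ, (x, y) ∈ I.roleI r → (y, z) ∈ I.roleI r → (x, z) ∈ I.roleI r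

/-- Satisfaction of an ABox assertion. -/
def DLInterp.satAssertion {C R Ind : Type} (I : DLInterp C R Ind) : DLAssertion C R Ind → Prop
  | .conceptAssert c a => I.indI a ∈ I.concept c
  | .roleAssert r a b => (I.indI a, I.indI b) ∈ I.role r

/-- An ontology: a TBox and an ABox. -/
structure DLOntology (C R Ind : Type) : Type where
  tbox : Set (DLAxiom C R Ind)
  abox : Set (DLAssertion C R Ind)

/-- `I` is a model of `K`. -/
def DLInterp.isModel {C R Ind : Type} (I : DLInterp C R Ind) (K : DLOntology C R Ind) : Prop :=
  (∀ ax ∈ K.tbox, I.satAxiom ax) ∧ (∀ asr ∈ K.abox, I.satAssertion asr)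

/-- `K ⊨ α` for an assertion `α`. -/
def DLOntology.entails {C R Ind : Type} (K : DLOntology C R Ind) (α : DLAssertion C R Ind) : Prop :=
  ∀ I : DLInterp C R Ind, I.isModel K → I.satAssertion α

/-- `K ⊨ c ⊑ d`. -/
def DLOntology.entailsGCI {C R Ind : Type} (K : DLOntology C R Ind) (c d : DLConcept C R Ind) : Prop :=
  ∀ I : DLInterp C R Ind, I.isModel K → I.concept c ⊆ I.concept d

/-- `T ⊨ c ⊑ d` for a TBox `T`. -/
def tboxEntailsGCI {C R Ind : Type} (T : Set (DLAxiom C R Ind)) (c d : DLConcept C R Ind) : Prop :=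
  ∀ I : DLInterp C R Ind, (∀ ax ∈ T, I.satAxiom ax) → I.concept c ⊆ I.concept d

/-- `c` is a most specific concept of the individual `a` w.r.t. `K = (T, A)`:
`K ⊨ c(a)` and for every concept `d` with `K ⊨ d(a)`, `T ⊨ c ⊑ d`. -/
def isMSC {C R Ind : Type} (K : DLOntology C R Ind) (a : Ind) (c : DLConcept C R Ind) : Prop :=
  K.entails (.conceptAssert c a) ∧
    ∀ d : DLConcept C R Ind, K.entails (.conceptAssert d a) → tboxEntailsGCI K.tbox c d

/-- The chain of concepts `C₀ = A`, `Cₙ₊₁ = A ⊓ ∃R.Cₙ`. -/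
def chainConcept {C R Ind : Type} (A : C) (r : R) : ℕ → DLConcept C R Ind
  | 0 => .atomic A
  | n + 1 => .conj (.atomic A) (.ex (.atomic r) (chainConcept A r n))

/-- Counterexample interpretation: domain ℕ, `A` = {0,…,n}, `R` = successor. -/
def chainBadInterp (C R Ind : Type) (n : ℕ) : DLInterp C R Ind where
  Δ := ℕ
  nonempty := ⟨0⟩
  conceptI := fun _ => {k | k ≤ n}
  roleI := fun _ => {p | p.2 = p.1 + 1}
  indI := fun _ => 0

lemma chainBadInterp_mem {C R Ind : Type} (A : C) (r : R) (n : ℕ) :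
    ∀ (m : ℕ) (x : ℕ), x ∈ (chainBadInterp C R Ind n).concept (chainConcept A r m) ↔ x + m ≤ n := by
  intro m
  induction m with
  | zero =>
    intro x
    simp [chainConcept, chainBadInterp, DLInterp.concept]
    exact Iff.rfl
  | succ m ih =>
    intro x
    simp only [chainConcept, DLInterp.concept, Set.mem_inter_iff, Set.mem_setOf_eq]
    constructor
    · rintro ⟨hx, y, hy, hyc⟩
      obtain rfl : y = x + 1 := hy
      have := (ih (x + 1)).mp hyc
      omega
    · intro h
      refine ⟨?_, x + 1, rfl, (ih (x+1)).mpr (by omega)⟩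
      simp only [chainBadInterp, Set.mem_setOf_eq]
      exact (by omega : x ≤ n)

lemma chain_entails {C R Ind : Type} (A : C) (r : R) (a : Ind) (m : ℕ) :
    (DLOntology.mk (C := C) (R := R) (Ind := Ind) ∅
      {DLAssertion.conceptAssert (.atomic A) a,
        DLAssertion.roleAssert (.atomic r) a a}).entails
      (.conceptAssert (chainConcept A r m) a) := by
  intro I hI
  have hA : I.indI a ∈ I.conceptI A := hI.2 _ (Or.inl rfl)
  have hR : (I.indI a, I.indI a) ∈ I.roleI r := hI.2 _ (Or.inr rfl)
  induction m with
  | zero => exact hA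
  | succ m ih =>
    exact ⟨hA, I.indI a, hR, ih⟩

/-- no `Cₙ` is subsumed by `Cₙ₊₁` w.r.t. the empty TBox, and consequently no
`Cₙ` is a most specific concept of `a` in the ontology `(∅, {A(a), R(a,a)})`. -/
theorem chain_never_most_specific {C R Ind : Type} (A : C) (r : R) (a : Ind) :
    (∀ n : ℕ, ∃ I : DLInterp C R Ind,
        ¬ I.concept (chainConcept A r n) ⊆ I.concept (chainConcept A r (n + 1))) ∧
    (∀ n : ℕ, ¬ isMSC
        (DLOntology.mk ∅
          {DLAssertion.conceptAssert (.atomic A) a,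
            DLAssertion.roleAssert (.atomic r) a a})
        a (chainConcept A r n)) := by
  have part1 : ∀ n : ℕ, ∃ I : DLInterp C R Ind,
      ¬ I.concept (chainConcept A r n) ⊆ I.concept (chainConcept A r (n + 1)) := by
    intro n
    refine ⟨chainBadInterp C R Ind n, fun h => ?_⟩
    have h0 : (0 : ℕ) ∈ (chainBadInterp C R Ind n).concept (chainConcept A r n) :=
      (chainBadInterp_mem A r n n 0).mpr (by omega)
    have := (chainBadInterp_mem A r n (n+1) 0).mp (h h0)
    omega
  refine ⟨part1, fun n hmsc => ?_⟩
  obtain ⟨I, hI⟩ := part1 n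
  exact hI (hmsc.2 (chainConcept A r (n+1)) (chain_entails A r a (n+1)) I (by simp))
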